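/- Let ρ = (1/4)(I₉ − Σ_{i=0}^{4} |ψ_i⟩⟨ψ_i|) where ψ_i are the TILES UPB vectors in ℂ³ ⊗ ℂ³. Then ρ is a state (positive semidefinite with trace 1) and ρ is positive under partial transpose: (id ⊗ T)ρ ≥ 0. -/

import Mathlib

open Matrix ComplexOrder

/-- Standard basis vector `|i⟩` of `ℂ³`. -/
noncomputable def e (i : Fin 3) : Fin 3 → ℂ := Pi.single i 1

/-- Tensor product of two vectors of `ℂ³`, as a vector of `ℂ³ ⊗ ℂ³ ≅ ℂ⁹`. -/
def tens (a b : Fin 3 → ℂ) : Fin 3 × Fin 3 → ℂ := fun p => a p.1 * b p.2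

/-- The five TILES vectors in `ℂ³ ⊗ ℂ³`. -/
noncomputable def tiles : Fin 5 → (Fin 3 × Fin 3 → ℂ)
  | 0 => (1 / Real.sqrt 2 : ℝ) • tens (e 0) (e 0 - e 1)
  | 1 => (1 / Real.sqrt 2 : ℝ) • tens (e 0 - e 1) (e 2)
  | 2 => (1 / Real.sqrt 2 : ℝ) • tens (e 2) (e 1 - e 2)
  | 3 => (1 / Real.sqrt 2 : ℝ) • tens (e 1 - e 2) (e 0)
  | 4 => (1 / 3 : ℝ) • tens (e 0 + e 1 + e 2) (e 0 + e 1 + e 2)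

/-- The TILES state `ρ = (1/4)(I₉ − Σᵢ |ψᵢ⟩⟨ψᵢ|)`. -/
noncomputable def tilesState : Matrix (Fin 3 × Fin 3) (Fin 3 × Fin 3) ℂ :=
  (1 / 4 : ℂ) •
    (1 - ∑ i : Fin 5, Matrix.vecMulVec (tiles i) (fun q => (starRingEnd ℂ) (tiles i q)))

/-- Partial transpose on the second tensor factor. -/
def partialTranspose (ρ : Matrix (Fin 3 × Fin 3) (Fin 3 × Fin 3) ℂ) :
    Matrix (Fin 3 × Fin 3) (Fin 3 × Fin 3) ℂ :=
  Matrix.of fun p q => ρ (p.1, q.2) (q.1, p.2)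

lemma sqrt2_inv_sq : ((Real.sqrt 2 : ℝ) : ℂ)⁻¹ * ((Real.sqrt 2 : ℝ) : ℂ)⁻¹ = 1 / 2 := by
  rw [← mul_inv, ← Complex.ofReal_mul, Real.mul_self_sqrt (by norm_num)]
  norm_num

/-- The tiles are orthonormal. -/
lemma ortho (i j : Fin 5) :
    (fun q => (starRingEnd ℂ) (tiles i q)) ⬝ᵥ tiles j = if i = j then 1 else 0 := by
  fin_cases i <;> fin_cases j <;>
    simp [tiles, tens, e, dotProduct, Fintype.sum_prod_type, Fin.sum_univ_three,
      Pi.single_apply, Complex.real_smul, _root_.map_mul, Complex.conj_ofReal,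
      Complex.conj_ofNat] <;>
    norm_num [sqrt2_inv_sq]

/-- The sum of the rank-one projections onto the tiles. -/
noncomputable def Pm : Matrix (Fin 3 × Fin 3) (Fin 3 × Fin 3) ℂ :=
  ∑ i : Fin 5, Matrix.vecMulVec (tiles i) (fun q => (starRingEnd ℂ) (tiles i q))

lemma tilesState_eq : tilesState = (1 / 4 : ℂ) • (1 - Pm) := rfl

lemma vmv_mul (u v x y : Fin 3 × Fin 3 → ℂ) :
    vecMulVec u v * vecMulVec x y = (v ⬝ᵥ x) • vecMulVec u y := by
  ext p r
  simp only [mul_apply, vecMulVec_apply, Matrix.smul_apply, smul_eq_mul, dotProduct,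
    Finset.sum_mul]
  exact Finset.sum_congr rfl fun q _ => by ring

lemma Pm_mul : Pm * Pm = Pm := by
  rw [Pm, Finset.sum_mul_sum]
  rw [Finset.sum_congr rfl (fun i _ => Finset.sum_congr rfl
    (fun j _ => by rw [vmv_mul, ortho]))]
  simp [ite_smul]

lemma Pm_herm : Pmᴴ = Pm := by
  ext p q
  simp [Pm, conjTranspose_apply, Matrix.sum_apply, vecMulVec_apply, mul_comm]

lemma e_real (i j : Fin 3) : (starRingEnd ℂ) (e i j) = e i j := by
  simp [e, Pi.single_apply, apply_ite]

lemma tiles_swap (m : Fin 5) (i j k l : Fin 3) :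
    tiles m (i, l) * (starRingEnd ℂ) (tiles m (k, j)) =
      tiles m (i, j) * (starRingEnd ℂ) (tiles m (k, l)) := by
  fin_cases m <;>
    simp only [tiles, tens, Pi.smul_apply, Pi.sub_apply, Pi.add_apply,
      Complex.real_smul, _root_.map_mul, map_sub, map_add, Complex.conj_ofReal, e_real] <;>
    ring

lemma pt_fix : partialTranspose tilesState = tilesState := by
  ext ⟨i, j⟩ ⟨k, l⟩
  simp only [partialTranspose, tilesState, Matrix.of_apply, Matrix.smul_apply,
    Matrix.sub_apply, Matrix.one_apply, Matrix.sum_apply, vecMulVec_apply,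
    Prod.mk.injEq, Prod.ext_iff]
  have h1 : (i = k ∧ l = j) ↔ (i = k ∧ j = l) := by
    constructor <;> rintro ⟨h, h'⟩ <;> exact ⟨h, h'.symm⟩
  simp only [h1]
  rw [Finset.sum_congr rfl fun m _ => tiles_swap m i j k l]

lemma key : tilesState = ((1 / 2 : ℂ) • (1 - Pm))ᴴ * ((1 / 2 : ℂ) • (1 - Pm)) := by
  rw [conjTranspose_smul, conjTranspose_sub, conjTranspose_one, Pm_herm,
    Matrix.smul_mul, Matrix.mul_smul, smul_smul, sub_mul, mul_sub, mul_sub,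
    one_mul, mul_one, Pm_mul, sub_self, sub_zero, tilesState_eq]
  congr 1
  · simp [Complex.ext_iff]; norm_num
  · rw [one_mul]

lemma trace_Pm : Pm.trace = 5 := by
  rw [Pm, trace_sum]
  have h : ∀ i : Fin 5,
      (vecMulVec (tiles i) fun q => (starRingEnd ℂ) (tiles i q)).trace = 1 := by
    intro i
    have := ortho i i
    rw [if_pos rfl, dotProduct] at this
    rw [trace]
    simp only [diag_apply, vecMulVec_apply]
    rw [← this]
    exact Finset.sum_congr rfl fun q _ => mul_comm _ _
  simp [h]

/-- The TILES state is a PPT state. -/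
theorem tilesState_is_ppt_state :
    tilesState.PosSemidef ∧ tilesState.trace = 1 ∧ (partialTranspose tilesState).PosSemidef := by
  have psd : tilesState.PosSemidef := by
    rw [key]; exact posSemidef_conjTranspose_mul_self _
  refine ⟨psd, ?_, ?_⟩
  · rw [tilesState_eq, trace_smul, trace_sub, trace_one, trace_Pm]
    simp
    norm_num
  · rw [pt_fix]; exact psd
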